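/- arXiv:1504.07124 — 4 statements merged into one kernel-verified Lean document; each statement's English description precedes it below -/
import Mathlib

section
/- The function E(t) = (3(1 − p_inv)e^{−θt}(1 − e^{−4t/(3(1 − p_inv))})) / (4(p_inv + (1 − p_inv)e^{−θt})), for p_inv ∈ (0,1) and θ > 0, is not monotonically increasing on [0, ∞): there exist 0 < t₁ < t₂ with E(t₁) > E(t₂). -/
open Filter Topology

/-- The expected p-distance of the paired invariants model is not monotonically
increasing: there exist `0 < t₁ < t₂` with `E(t₁) > E(t₂)`. -/
theorem stmt_12 (p θ : ℝ) (hp : p ∈ Set.Ioo (0 : ℝ) 1) (hθ : 0 < θ)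
    (E : ℝ → ℝ)
    (hE : ∀ t, E t = 3 * (1 - p) * Real.exp (-θ * t) *
        (1 - Real.exp (-4 * t / (3 * (1 - p)))) /
        (4 * (p + (1 - p) * Real.exp (-θ * t)))) :
    ∃ t₁ t₂ : ℝ, 0 < t₁ ∧ t₁ < t₂ ∧ E t₂ < E t₁ := by
  obtain ⟨hp0, hp1⟩ := hp
  have h1p : (0:ℝ) < 1 - p := by linarith
  -- E 1 > 0
  have hE1 : 0 < E 1 := by
    rw [hE]
    apply div_pos
    · apply mul_pos (mul_pos (by linarith) (Real.exp_pos _))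
      have : Real.exp (-4 * 1 / (3 * (1 - p))) < 1 := by
        rw [Real.exp_lt_one_iff]
        apply div_neg_of_neg_of_pos <;> nlinarith
      linarith
    · have := Real.exp_pos (-θ * 1)
      nlinarith
  -- E tends to 0 at infinity
  have hexp : Tendsto (fun t : ℝ => Real.exp (-θ * t)) atTop (𝓝 0) := by
    apply Real.tendsto_exp_atBot.comp
    exact (tendsto_neg_atBot_iff.mpr tendsto_id).atBot_mul_const' hθ |>.congr
      (fun t => by simp [mul_comm])
  have hexp2 : Tendsto (fun t : ℝ => Real.exp (-4 * t / (3 * (1 - p)))) atTop (𝓝 0) := by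
    apply Real.tendsto_exp_atBot.comp
    have : Tendsto (fun t : ℝ => t * (-4 / (3 * (1 - p)))) atTop atBot := by
      apply Tendsto.atTop_mul_const_of_neg _ tendsto_id
      exact div_neg_of_neg_of_pos (by norm_num) (by nlinarith)
    exact this.congr (fun t => by ring)
  have hlim : Tendsto E atTop (𝓝 0) := by
    have hnum : Tendsto (fun t : ℝ => 3 * (1 - p) * Real.exp (-θ * t) *
        (1 - Real.exp (-4 * t / (3 * (1 - p))))) atTop (𝓝 0) := by
      have := ((tendsto_const_nhds.mul hexp).mul
        (tendsto_const_nhds.sub hexp2) :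
        Tendsto (fun t : ℝ => (3 * (1 - p) * Real.exp (-θ * t)) *
          (1 - Real.exp (-4 * t / (3 * (1 - p))))) atTop (𝓝 ((3 * (1 - p) * 0) * (1 - 0))))
      simpa using this
    have hden : Tendsto (fun t : ℝ => 4 * (p + (1 - p) * Real.exp (-θ * t))) atTop
        (𝓝 (4 * p)) := by
      have := (tendsto_const_nhds.add (tendsto_const_nhds.mul hexp) :
        Tendsto (fun t : ℝ => p + (1 - p) * Real.exp (-θ * t)) atTop (𝓝 (p + (1-p) * 0)))
      simpa using tendsto_const_nhds.mul this
    have := hnum.div hden (by positivity)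
    simp only [zero_div] at this
    exact this.congr (fun t => (hE t).symm)
  have hev : ∀ᶠ t in atTop, E t < E 1 := hlim.eventually (gt_mem_nhds hE1)
  obtain ⟨t₂, ht₂, ht₂'⟩ := (hev.and (eventually_gt_atTop 1)).exists
  exact ⟨1, t₂, one_pos, ht₂', ht₂⟩
end

section
/- Fix p_inv ∈ (0,1) and θ > 0, and let h(t) = (−3(1 − p_inv)/4) · ln(1 − e^{−θt}(1 − e^{−4t/(3(1 − p_inv))}) / (p_inv + (1 − p_inv)e^{−θt})). Then h''(0) = −2·p_inv·θ. In particular, h''(0) < 0 whenever p_inv > 0 and θ > 0, so h is strictly concave on some interval [s/2, s] with s > 0. -/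
open Real

private lemma expAux (a t : ℝ) :
    HasDerivAt (fun t : ℝ => Real.exp (a * t)) (a * Real.exp (a * t)) t := by
  simpa [mul_comm] using ((hasDerivAt_id t).const_mul a).exp

noncomputable def Nf (p b c t : ℝ) : ℝ := p + Real.exp (-(b + c) * t) - p * Real.exp (-b * t)
noncomputable def N1 (p b c t : ℝ) : ℝ :=
  -(b + c) * Real.exp (-(b + c) * t) + p * b * Real.exp (-b * t)
noncomputable def N2 (p b c t : ℝ) : ℝ :=
  (b + c) ^ 2 * Real.exp (-(b + c) * t) - p * b ^ 2 * Real.exp (-b * t)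
noncomputable def Df (p b t : ℝ) : ℝ := p + (1 - p) * Real.exp (-b * t)
noncomputable def D1 (p b t : ℝ) : ℝ := -((1 - p) * b) * Real.exp (-b * t)
noncomputable def D2 (p b t : ℝ) : ℝ := (1 - p) * b ^ 2 * Real.exp (-b * t)

noncomputable def Phi1 (p b c t : ℝ) : ℝ :=
  -(1 / c) * (N1 p b c t / Nf p b c t - D1 p b t / Df p b t)
noncomputable def Phi2 (p b c t : ℝ) : ℝ :=
  -(1 / c) * ((N2 p b c t * Nf p b c t - N1 p b c t * N1 p b c t) / Nf p b c t ^ 2 -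
    (D2 p b t * Df p b t - D1 p b t * D1 p b t) / Df p b t ^ 2)

private lemma hasDerivAt_Nf (p b c t : ℝ) :
    HasDerivAt (fun t => Nf p b c t) (N1 p b c t) t := by
  unfold Nf N1
  have H : HasDerivAt (fun t : ℝ => p + Real.exp (-(b + c) * t) - p * Real.exp (-b * t))
      (-(b + c) * Real.exp (-(b + c) * t) - p * (-b * Real.exp (-b * t))) t :=
    ((expAux (-(b + c)) t).const_add p).sub ((expAux (-b) t).const_mul p)
  convert H using 1
  ring

private lemma hasDerivAt_N1 (p b c t : ℝ) :
    HasDerivAt (fun t => N1 p b c t) (N2 p b c t) t := by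
  unfold N1 N2
  have H : HasDerivAt
      (fun t : ℝ => -(b + c) * Real.exp (-(b + c) * t) + p * b * Real.exp (-b * t))
      (-(b + c) * (-(b + c) * Real.exp (-(b + c) * t)) + p * b * (-b * Real.exp (-b * t))) t :=
    ((expAux (-(b + c)) t).const_mul (-(b + c))).add ((expAux (-b) t).const_mul (p * b))
  convert H using 1
  ring

private lemma hasDerivAt_Df (p b t : ℝ) :
    HasDerivAt (fun t => Df p b t) (D1 p b t) t := by
  unfold Df D1
  have H : HasDerivAt (fun t : ℝ => p + (1 - p) * Real.exp (-b * t))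
      ((1 - p) * (-b * Real.exp (-b * t))) t :=
    ((expAux (-b) t).const_mul (1 - p)).const_add p
  convert H using 1
  ring

private lemma hasDerivAt_D1 (p b t : ℝ) :
    HasDerivAt (fun t => D1 p b t) (D2 p b t) t := by
  unfold D1 D2
  have H : HasDerivAt (fun t : ℝ => -((1 - p) * b) * Real.exp (-b * t))
      (-((1 - p) * b) * (-b * Real.exp (-b * t))) t :=
    (expAux (-b) t).const_mul (-((1 - p) * b))
  convert H using 1
  ring

private lemma Df_pos {p b : ℝ} (hp0 : 0 < p) (hp1 : p < 1) (t : ℝ) : 0 < Df p b t := by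
  have := Real.exp_pos (-b * t)
  have : 0 < (1 - p) * Real.exp (-b * t) := by nlinarith
  unfold Df; linarith

private lemma Nf_pos {p b c : ℝ} (hp0 : 0 < p) (hp1 : p < 1) (hb : 0 < b) (hc : 0 < c)
    (t : ℝ) : 0 < Nf p b c t := by
  have hE := Real.exp_pos (-b * t)
  have hG := Real.exp_pos (-(b + c) * t)
  unfold Nf
  rcases le_or_gt 0 t with ht | ht
  · have hE1 : Real.exp (-b * t) ≤ 1 := by
      rw [Real.exp_le_one_iff]
      nlinarith
    nlinarith
  · -- Nf = p + exp(-(b+c)t) - p exp(-bt) = p + exp(-bt)*(exp(-ct) - p)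
    have hsplit : Real.exp (-(b + c) * t) = Real.exp (-b * t) * Real.exp (-c * t) := by
      rw [← Real.exp_add]; ring_nf
    have hF1 : 1 ≤ Real.exp (-c * t) := by
      rw [Real.one_le_exp_iff]
      nlinarith
    nlinarith [mul_pos hE (sub_pos.2 (lt_of_lt_of_le hp1 hF1))]

private lemma continuous_Phi2 {p b c : ℝ} (hp0 : 0 < p) (hp1 : p < 1) (hb : 0 < b)
    (hc : 0 < c) : Continuous (Phi2 p b c) := by
  have cE : Continuous fun t : ℝ => Real.exp (-b * t) := by fun_prop
  have cG : Continuous fun t : ℝ => Real.exp (-(b + c) * t) := by fun_prop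
  have cN : Continuous (Nf p b c) := by unfold Nf; fun_prop
  have cN1 : Continuous (N1 p b c) := by unfold N1; fun_prop
  have cN2 : Continuous (N2 p b c) := by unfold N2; fun_prop
  have cD : Continuous (Df p b) := by unfold Df; fun_prop
  have cD1 : Continuous (D1 p b) := by unfold D1; fun_prop
  have cD2 : Continuous (D2 p b) := by unfold D2; fun_prop
  unfold Phi2
  apply Continuous.mul continuous_const
  apply Continuous.sub
  · exact ((cN2.mul cN).sub (cN1.mul cN1)).div (cN.pow 2)
      (fun t => pow_ne_zero 2 (Nf_pos hp0 hp1 hb hc t).ne')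
  · exact ((cD2.mul cD).sub (cD1.mul cD1)).div (cD.pow 2)
      (fun t => pow_ne_zero 2 (Df_pos hp0 hp1 t).ne')

/-- The second derivative at 0 of the transformed distance of the paired invariants
model is `-2 p_inv θ < 0`, so `h` is strictly concave on some interval `[s/2, s]`. -/
theorem stmt_14 (p θ : ℝ) (hp : p ∈ Set.Ioo (0 : ℝ) 1) (hθ : 0 < θ)
    (h : ℝ → ℝ)
    (hh : ∀ t, h t = -3 * (1 - p) / 4 *
        Real.log (1 - Real.exp (-θ * t) * (1 - Real.exp (-4 * t / (3 * (1 - p)))) /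
          (p + (1 - p) * Real.exp (-θ * t)))) :
    iteratedDeriv 2 h 0 = -2 * p * θ ∧ iteratedDeriv 2 h 0 < 0 ∧
      ∃ s : ℝ, 0 < s ∧ StrictConcaveOn ℝ (Set.Icc (s / 2) s) h := by
  obtain ⟨hp0, hp1⟩ := hp
  have h1p : (0 : ℝ) < 1 - p := by linarith
  set c : ℝ := 4 / (3 * (1 - p)) with hc
  have hcpos : 0 < c := by positivity
  have hN : ∀ t, 0 < Nf p θ c t := Nf_pos hp0 hp1 hθ hcpos
  have hD : ∀ t, 0 < Df p θ t := Df_pos hp0 hp1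
  -- rewrite h
  have hfun : h = fun t => -(1 / c) * (Real.log (Nf p θ c t) - Real.log (Df p θ t)) := by
    funext t
    rw [hh t]
    have e1 : Real.exp (-4 * t / (3 * (1 - p))) = Real.exp (-c * t) := by
      congr 1; rw [hc]; field_simp
    have e2 : (1 : ℝ) - Real.exp (-θ * t) * (1 - Real.exp (-c * t)) /
        (p + (1 - p) * Real.exp (-θ * t)) = Nf p θ c t / Df p θ t := by
      rw [eq_div_iff (hD t).ne']
      unfold Nf Df
      have : Real.exp (-(θ + c) * t) = Real.exp (-θ * t) * Real.exp (-c * t) := by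
        rw [← Real.exp_add]; ring_nf
      rw [this]
      field_simp
      ring
    rw [e1, e2, Real.log_div (hN t).ne' (hD t).ne']
    have : -3 * (1 - p) / 4 = -(1 / c) := by
      rw [hc]; field_simp
    rw [this]
  -- first derivative
  have hd1 : ∀ t, HasDerivAt h (Phi1 p θ c t) t := by
    intro t
    rw [hfun]
    have := (((hasDerivAt_Nf p θ c t).log (hN t).ne').sub
      ((hasDerivAt_Df p θ t).log (hD t).ne')).const_mul (-(1 / c))
    exact this
  have hderiv1 : deriv h = Phi1 p θ c := funext fun t => (hd1 t).deriv
  -- second derivative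
  have hd2 : ∀ t, HasDerivAt (Phi1 p θ c) (Phi2 p θ c t) t := by
    intro t
    have := (((hasDerivAt_N1 p θ c t).div (hasDerivAt_Nf p θ c t) (hN t).ne').sub
      ((hasDerivAt_D1 p θ t).div (hasDerivAt_Df p θ t) (hD t).ne')).const_mul (-(1 / c))
    unfold Phi1 Phi2
    exact this
  have hderiv2 : deriv (deriv h) = Phi2 p θ c := by
    rw [hderiv1]; exact funext fun t => (hd2 t).deriv
  have hiter : iteratedDeriv 2 h = deriv (deriv h) := by
    rw [iteratedDeriv_succ, iteratedDeriv_one]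
  -- value at 0
  have hval : Phi2 p θ c 0 = -2 * p * θ := by
    unfold Phi2 N2 Nf N1 D2 Df D1
    simp only [mul_zero, Real.exp_zero]
    rw [hc]
    field_simp
    ring
  have hval0 : iteratedDeriv 2 h 0 = -2 * p * θ := by
    rw [hiter, hderiv2, hval]
  have hneg : iteratedDeriv 2 h 0 < 0 := by rw [hval0]; nlinarith
  refine ⟨hval0, hneg, ?_⟩
  -- strict concavity on a small interval
  have hcont2 : Continuous (Phi2 p θ c) := continuous_Phi2 hp0 hp1 hθ hcpos
  have hlt0 : Phi2 p θ c 0 < 0 := by rw [hval]; nlinarith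
  have hev : ∀ᶠ t in nhds (0 : ℝ), Phi2 p θ c t < 0 :=
    (hcont2.tendsto 0).eventually_lt_const hlt0
  rw [Metric.eventually_nhds_iff] at hev
  obtain ⟨δ, hδ, hball⟩ := hev
  refine ⟨δ / 2, by linarith, ?_⟩
  have hconth : Continuous h := by
    rw [hfun]
    have cN : Continuous (Nf p θ c) := by unfold Nf; fun_prop
    have cD : Continuous (Df p θ) := by unfold Df; fun_prop
    exact continuous_const.mul ((cN.log fun t => (hN t).ne').sub
      (cD.log fun t => (hD t).ne'))
  apply strictConcaveOn_of_deriv2_neg (convex_Icc _ _) hconth.continuousOn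
  intro x hx
  rw [interior_Icc] at hx
  have hx1 : δ / 2 / 2 < x := hx.1
  have hx2 : x < δ / 2 := hx.2
  have : deriv^[2] h x = Phi2 p θ c x := by
    show deriv (deriv h) x = _
    rw [hderiv2]
  rw [this]
  apply hball
  rw [Real.dist_eq, sub_zero, abs_of_pos (by linarith)]
  linarith
end

section
/- Fix p_inv ∈ (0,1) and θ > 0, and let h(t) be the transformed distance function of the paired invariants model (as in Eqn. 8 of the paper). Then h is not monotonically increasing on its domain; in particular there exists T > 0 beyond which h is decreasing, and h(t) → 0 as t → ∞. -/
open Filter Real Set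

/-- The transformed distance of the paired invariants model is not monotone on
`[0, ∞)`: it is eventually decreasing and tends to 0 at infinity. -/
theorem stmt_15 (p θ : ℝ) (hp : p ∈ Set.Ioo (0 : ℝ) 1) (hθ : 0 < θ)
    (h : ℝ → ℝ)
    (hh : ∀ t, h t = -3 * (1 - p) / 4 *
        Real.log (1 - Real.exp (-θ * t) * (1 - Real.exp (-4 * t / (3 * (1 - p)))) /
          (p + (1 - p) * Real.exp (-θ * t)))) :
    ¬ MonotoneOn h (Set.Ici 0) ∧
      (∃ T : ℝ, 0 < T ∧ AntitoneOn h (Set.Ici T)) ∧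
      Filter.Tendsto h Filter.atTop (nhds 0) := by
  obtain ⟨hp0, hp1⟩ := hp
  have h1p : (0:ℝ) < 1 - p := by linarith
  set a : ℝ := 4 / (3 * (1 - p)) with ha_def
  have ha : 0 < a := by positivity
  set c : ℝ := -3 * (1 - p) / 4 with hc_def
  have hc : c < 0 := by rw [hc_def]; nlinarith
  set D : ℝ → ℝ := fun t => p * Real.exp (θ * t) + (1 - p) with hD_def
  have hDpos : ∀ t, 0 < D t := fun t => by positivity
  set f : ℝ → ℝ := fun t => (1 - Real.exp (-(a * t))) / D t with hf_def
  -- rewrite h in terms of f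
  have key : ∀ t, h t = c * Real.log (1 - f t) := by
    intro t
    rw [hh t]
    congr 2
    have e1 : -4 * t / (3 * (1 - p)) = -(a * t) := by
      rw [ha_def]; field_simp
    rw [e1, show -θ * t = -(θ * t) by ring, Real.exp_neg]
    have hE : (0:ℝ) < Real.exp (θ * t) := Real.exp_pos _
    have hden : p + (1 - p) * (Real.exp (θ * t))⁻¹ ≠ 0 := by positivity
    simp only [hf_def, hD_def]
    field_simp
  -- basic bounds on f
  have hD1 : ∀ t, 0 ≤ t → 1 ≤ D t := by
    intro t ht
    have : (1:ℝ) ≤ Real.exp (θ * t) := Real.one_le_exp (by positivity)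
    simp only [hD_def]; nlinarith
  have hflt1 : ∀ t, 0 ≤ t → f t < 1 := by
    intro t ht
    simp only [hf_def]
    rw [div_lt_one (hDpos t)]
    have := Real.exp_pos (-(a * t))
    have := hD1 t ht
    linarith
  have hfge0 : ∀ t, 0 ≤ t → 0 ≤ f t := by
    intro t ht
    have : Real.exp (-(a * t)) ≤ 1 := Real.exp_le_one_iff.mpr (by nlinarith)
    exact div_nonneg (by linarith) (hDpos t).le
  -- Tendsto f atTop (nhds 0)
  have hEtop : Tendsto (fun t => Real.exp (θ * t)) atTop atTop :=
    Real.tendsto_exp_atTop.comp (tendsto_id.const_mul_atTop hθ)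
  have hDtop : Tendsto D atTop atTop := by
    simp only [hD_def]
    exact tendsto_atTop_add_const_right atTop (1 - p) (hEtop.const_mul_atTop hp0)
  have hexp0 : Tendsto (fun t => Real.exp (-(a * t))) atTop (nhds 0) :=
    Real.tendsto_exp_atBot.comp (tendsto_neg_atTop_atBot.comp (tendsto_id.const_mul_atTop ha))
  have hnum : Tendsto (fun t => 1 - Real.exp (-(a * t))) atTop (nhds 1) := by
    simpa using tendsto_const_nhds.sub hexp0
  have hf0 : Tendsto f atTop (nhds 0) := by
    simp only [hf_def]
    exact hnum.div_atTop hDtop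
  -- Tendsto h atTop (nhds 0)
  have hfun : h = fun t => c * Real.log (1 - f t) := funext key
  have hlog : Tendsto (fun t => Real.log (1 - f t)) atTop (nhds 0) := by
    have h1 : Tendsto (fun t => 1 - f t) atTop (nhds 1) := by
      simpa using tendsto_const_nhds.sub hf0
    have := (Real.continuousAt_log one_ne_zero).tendsto.comp h1
    simpa [Function.comp_def] using this
  have htend : Tendsto h atTop (nhds 0) := by
    rw [hfun]
    simpa using hlog.const_mul c
  -- h is positive at 1
  have hpos1 : 0 < h 1 := by
    rw [key 1]
    have hf1pos : 0 < f 1 := by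
      simp only [hf_def]
      apply div_pos _ (hDpos 1)
      have : Real.exp (-(a * 1)) < 1 := Real.exp_lt_one_iff.mpr (by nlinarith)
      linarith
    have hf1lt : f 1 < 1 := hflt1 1 zero_le_one
    have : Real.log (1 - f 1) < 0 := Real.log_neg (by linarith) (by linarith)
    exact mul_pos_of_neg_of_neg hc this
  -- the derivative of f
  have hderiv : ∀ t, HasDerivAt f
      ((a * Real.exp (-(a * t)) * D t -
        (1 - Real.exp (-(a * t))) * (p * (Real.exp (θ * t) * θ))) / D t ^ 2) t := by
    intro t
    have h1 : HasDerivAt (fun s : ℝ => -(a * s)) (-a) t := by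
      have h0 : HasDerivAt (fun s : ℝ => -(a * s)) (-(a * 1)) t := ((hasDerivAt_id t).const_mul a).neg
      simpa using h0
    have h2 := h1.exp
    have hN : HasDerivAt (fun s => 1 - Real.exp (-(a * s))) (a * Real.exp (-(a * t))) t := by
      have h3 := ((hasDerivAt_const t (1:ℝ)).sub h2 : HasDerivAt (fun s => 1 - Real.exp (-(a * s))) _ t)
      exact h3.congr_deriv (by ring)
    have h4 : HasDerivAt (fun s : ℝ => θ * s) θ t := by
      simpa using (hasDerivAt_id t).const_mul θ
    have hDd : HasDerivAt D (p * (Real.exp (θ * t) * θ)) t := by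
      simp only [hD_def]
      exact ((h4.exp).const_mul p).add_const (1 - p)
    simp only [hf_def]
    exact hN.div hDd (hDpos t).ne'
  -- choose the threshold T
  set ε : ℝ := min (min (1/2) (θ / (4 * a))) (p * θ / (4 * a * (1 - p))) with hε_def
  have hεpos : 0 < ε := by
    apply lt_min (lt_min (by norm_num) (by positivity)) (by positivity)
  set T : ℝ := max 1 (-Real.log ε / a) with hT_def
  have hT1 : (1:ℝ) ≤ T := le_max_left _ _
  have hT0 : (0:ℝ) < T := by linarith
  have hexp_le : ∀ t, T ≤ t → Real.exp (-(a * t)) ≤ ε := by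
    intro t ht
    have h1 : -Real.log ε / a ≤ t := le_trans (le_max_right _ _) ht
    have h2 : -(a * t) ≤ Real.log ε := by
      rw [div_le_iff₀ ha] at h1
      nlinarith
    calc Real.exp (-(a * t)) ≤ Real.exp (Real.log ε) := Real.exp_le_exp.mpr h2
      _ = ε := Real.exp_log hεpos
  -- deriv f ≤ 0 on [T, ∞)
  have hderiv_nonpos : ∀ t, T ≤ t → deriv f t ≤ 0 := by
    intro t ht
    rw [(hderiv t).deriv]
    apply div_nonpos_of_nonpos_of_nonneg _ (by positivity)
    have htpos : 0 ≤ t := by linarith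
    set e := Real.exp (-(a * t)) with he_def
    set E := Real.exp (θ * t) with hE_def
    have hE1 : 1 ≤ E := Real.one_le_exp (by positivity)
    have heε : e ≤ ε := hexp_le t ht
    have he1 : e ≤ 1/2 := le_trans heε (le_trans (min_le_left _ _) (min_le_left _ _))
    have he2 : e ≤ θ / (4 * a) := le_trans heε (le_trans (min_le_left _ _) (min_le_right _ _))
    have he3 : e ≤ p * θ / (4 * a * (1 - p)) := le_trans heε (min_le_right _ _)
    have hae : a * e ≤ θ / 4 := by
      rw [le_div_iff₀ (by positivity)] at he2
      linarith
    have hae2 : a * e * (1 - p) ≤ p * θ / 4 := by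
      rw [le_div_iff₀ (by positivity)] at he3
      nlinarith
    have hepos : 0 < e := Real.exp_pos _
    have hDt : D t = p * E + (1 - p) := by simp only [hD_def, hE_def]
    rw [hDt]
    -- a*e*(p*E + (1-p)) - (1-e)*(p*(E*θ)) ≤ 0
    have k1 : a * e * (p * E) ≤ (θ / 4) * (p * E) := by
      apply mul_le_mul_of_nonneg_right hae (by positivity)
    have k2 : p * θ / 4 ≤ p * θ / 4 * E := le_mul_of_one_le_right (by positivity) hE1
    have k3 : (1/2) * (p * (E * θ)) ≤ (1 - e) * (p * (E * θ)) := by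
      apply mul_le_mul_of_nonneg_right (by linarith) (by positivity)
    nlinarith
  -- AntitoneOn f (Ici T)
  have hfcont : Continuous f := by
    simp only [hf_def]
    exact Continuous.div (by fun_prop) (by fun_prop) fun t => (hDpos t).ne'
  have hfanti : AntitoneOn f (Set.Ici T) := by
    apply antitoneOn_of_deriv_nonpos (convex_Ici T) hfcont.continuousOn
    · exact fun x _ => ((hderiv x).differentiableAt).differentiableWithinAt
    · intro x hx
      rw [interior_Ici] at hx
      exact hderiv_nonpos x (le_of_lt hx)
  -- AntitoneOn h (Ici T)
  have hhanti : AntitoneOn h (Set.Ici T) := by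
    intro x hx y hy hxy
    rw [key x, key y]
    have hx0 : (0:ℝ) ≤ x := le_trans hT0.le hx
    have hy0 : (0:ℝ) ≤ y := le_trans hT0.le hy
    have hfle : f y ≤ f x := hfanti hx hy hxy
    have h1 : 0 < 1 - f x := by linarith [hflt1 x hx0]
    have h2 : Real.log (1 - f x) ≤ Real.log (1 - f y) := by
      rw [Real.log_le_log_iff h1 (by linarith)]
      linarith
    exact mul_le_mul_of_nonpos_left h2 hc.le
  refine ⟨?_, ⟨T, hT0, hhanti⟩, htend⟩
  -- not monotone
  intro hmono
  have hev : ∀ᶠ t in atTop, h t < h 1 := htend.eventually_lt_const hpos1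
  obtain ⟨t, htlt, ht1⟩ := (hev.and (eventually_ge_atTop 1)).exists
  have := hmono (Set.mem_Ici.mpr zero_le_one) (Set.mem_Ici.mpr (by linarith)) ht1
  linarith
end

section
/- Let d be a dissimilarity on four taxa A, B, C, D of the form d(X,Y) = c·t(X,Y) for a constant c > 0, where t is the path-length metric of a binary four-taxon tree with topology AB|CD and strictly positive branch lengths. Then d(A,B) + d(C,D) < min{d(A,C) + d(B,D), d(A,D) + d(B,C)}, so the neighbor-joining four-point criterion selects the correct topology AB|CD. -/
/-- NJ four-point criterion on the true tree `AB|CD` with pendant branch lengths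
`a, b, c, d`, internal branch `e`, and distances proportional (factor `k > 0`) to
path lengths: the correct sum is the strict minimum. -/
theorem stmt_19 (k a b c d e : ℝ) (hk : 0 < k)
    (ha : 0 < a) (hb : 0 < b) (hc : 0 < c) (hd : 0 < d) (he : 0 < e) :
    k * (a + b) + k * (c + d) <
      min (k * (a + e + c) + k * (b + e + d)) (k * (a + e + d) + k * (b + e + c)) := by
  rw [lt_min_iff]
  constructor <;> nlinarith
end
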